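/- Let L be a bounded lattice, X_L its set of maximal filter–ideal pairs with the quasiorders x ≤ᵢ y iff xᵢ ⊆ yᵢ, and define h(a) = {x ∈ X_L : a ∈ x₁} for a ∈ L. Then for every a ∈ L, the set h(a) is a stable subset of the doubly ordered frame (X_L, ≤₁, ≤₂). -/

import Mathlib

/-- `lset le1 Y = l(Y) = {x : ∀ z, x ≤₁ z → z ∉ Y}`. -/
def lset {X : Type*} (le1 : X → X → Prop) (Y : Set X) : Set X :=
  {x | ∀ z, le1 x z → z ∉ Y}

/-- `rset le2 Y = r(Y) = {x : ∀ z, x ≤₂ z → z ∉ Y}`. -/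
def rset {X : Type*} (le2 : X → X → Prop) (Y : Set X) : Set X :=
  {x | ∀ z, le2 x z → z ∉ Y}

/-- A set is stable if `Y = l(r(Y))`. -/
def UrqStable {X : Type*} (le1 le2 : X → X → Prop) (Y : Set X) : Prop :=
  Y = lset le1 (rset le2 Y)

/-- `Y` is increasing with respect to a relation `le`. -/
def UrqIncr {X : Type*} (le : X → X → Prop) (Y : Set X) : Prop :=
  ∀ x y, x ∈ Y → le x y → y ∈ Y

/-- A doubly ordered frame: `le1`, `le2` are quasiorders (preorders) and
`x ≤₁ y` together with `x ≤₂ y` implies `x = y`. -/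
def DoublyOrdered {X : Type*} (le1 le2 : X → X → Prop) : Prop :=
  (∀ x, le1 x x) ∧ (∀ x y z, le1 x y → le1 y z → le1 x z) ∧
  (∀ x, le2 x x) ∧ (∀ x y z, le2 x y → le2 y z → le2 x z) ∧
  (∀ x y, le1 x y → le2 x y → x = y)

/-- A filter of a lattice: nonempty, upward closed, closed under binary meets. -/
def UrqFilter {L : Type*} [Lattice L] (F : Set L) : Prop :=
  F.Nonempty ∧ (∀ a b, a ∈ F → a ≤ b → b ∈ F) ∧ (∀ a b, a ∈ F → b ∈ F → a ⊓ b ∈ F)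

/-- A proper filter. -/
def UrqProperFilter {L : Type*} [Lattice L] (F : Set L) : Prop :=
  UrqFilter F ∧ F ≠ Set.univ

/-- An ideal of a lattice: nonempty, downward closed, closed under binary joins. -/
def UrqIdeal {L : Type*} [Lattice L] (I : Set L) : Prop :=
  I.Nonempty ∧ (∀ a b, a ∈ I → b ≤ a → b ∈ I) ∧ (∀ a b, a ∈ I → b ∈ I → a ⊔ b ∈ I)

/-- A proper ideal. -/
def UrqProperIdeal {L : Type*} [Lattice L] (I : Set L) : Prop :=
  UrqIdeal I ∧ I ≠ Set.univ

/-- A filter–ideal pair: a proper filter and a proper ideal which are disjoint. -/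
def UrqFIPair {L : Type*} [Lattice L] (p : Set L × Set L) : Prop :=
  UrqProperFilter p.1 ∧ UrqProperIdeal p.2 ∧ p.1 ∩ p.2 = ∅

/-- A maximal filter–ideal pair. -/
def UrqMaxFIPair {L : Type*} [Lattice L] (p : Set L × Set L) : Prop :=
  UrqFIPair p ∧
  (∀ F', UrqProperFilter F' → p.1 ⊂ F' → (F' ∩ p.2).Nonempty) ∧
  (∀ I', UrqProperIdeal I' → p.2 ⊂ I' → (p.1 ∩ I').Nonempty)

/-- The set `X_L` of maximal filter–ideal pairs of `L`. -/
def UrqXL (L : Type*) [Lattice L] : Type _ := {p : Set L × Set L // UrqMaxFIPair p}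

/-- `x ≤₁ y` iff `x₁ ⊆ y₁` on `X_L`. -/
def UrqLe1 {L : Type*} [Lattice L] (x y : UrqXL L) : Prop := x.1.1 ⊆ y.1.1

/-- `x ≤₂ y` iff `x₂ ⊆ y₂` on `X_L`. -/
def UrqLe2 {L : Type*} [Lattice L] (x y : UrqXL L) : Prop := x.1.2 ⊆ y.1.2

/-- The Urquhart representation map `h(a) = {x ∈ X_L : a ∈ x₁}`. -/
def UrqH {L : Type*} [Lattice L] (a : L) : Set (UrqXL L) := {x | a ∈ x.1.1}


/-- Every filter–ideal pair extends to a maximal one. -/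
theorem urq_exists_max_ext {L : Type*} [Lattice L] (p : Set L × Set L)
    (hp : UrqFIPair p) :
    ∃ q : Set L × Set L, UrqMaxFIPair q ∧ p.1 ⊆ q.1 ∧ p.2 ⊆ q.2 := by
  obtain ⟨m, hpm, hmS, hmax⟩ := zorn_le_nonempty₀ {q : Set L × Set L | UrqFIPair q}
    (fun c hcS hch y hyc => by
      refine ⟨(⋃ q ∈ c, q.1, ⋃ q ∈ c, q.2), ?_, ?_⟩
      · have key : ∀ u v, u ∈ c → v ∈ c → u ≤ v ∨ v ≤ u := fun u v hu hv => by
          rcases eq_or_ne u v with rfl | hne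
          · exact Or.inl le_rfl
          · exact hch hu hv hne
        have disj : ((⋃ q ∈ c, q.1) ∩ ⋃ q ∈ c, q.2 : Set L) = ∅ := by
          ext t; simp only [Set.mem_inter_iff, Set.mem_iUnion, Set.mem_empty_iff_false,
            iff_false, not_and]
          rintro ⟨u, hu, htu⟩ ⟨v, hv, htv⟩
          rcases key u v hu hv with h | h
          · have : t ∈ v.1 ∩ v.2 := ⟨h.1 htu, htv⟩
            rw [(hcS hv).2.2] at this; exact this
          · have : t ∈ u.1 ∩ u.2 := ⟨htu, h.2 htv⟩
            rw [(hcS hu).2.2] at this; exact this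
        obtain ⟨f0, hf0⟩ := (hcS hyc).1.1.1
        obtain ⟨i0, hi0⟩ := (hcS hyc).2.1.1.1
        have hf0' : f0 ∈ ⋃ q ∈ c, q.1 := Set.mem_iUnion₂.2 ⟨y, hyc, hf0⟩
        have hi0' : i0 ∈ ⋃ q ∈ c, q.2 := Set.mem_iUnion₂.2 ⟨y, hyc, hi0⟩
        refine ⟨⟨⟨⟨f0, hf0'⟩, ?_, ?_⟩, ?_⟩, ⟨⟨⟨i0, hi0'⟩, ?_, ?_⟩, ?_⟩, disj⟩
        · rintro s t hs hst
          obtain ⟨u, hu, hsu⟩ := Set.mem_iUnion₂.1 hs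
          exact Set.mem_iUnion₂.2 ⟨u, hu, (hcS hu).1.1.2.1 s t hsu hst⟩
        · rintro s t hs ht
          obtain ⟨u, hu, hsu⟩ := Set.mem_iUnion₂.1 hs
          obtain ⟨v, hv, htv⟩ := Set.mem_iUnion₂.1 ht
          rcases key u v hu hv with h | h
          · exact Set.mem_iUnion₂.2 ⟨v, hv, (hcS hv).1.1.2.2 s t (h.1 hsu) htv⟩
          · exact Set.mem_iUnion₂.2 ⟨u, hu, (hcS hu).1.1.2.2 s t hsu (h.1 htv)⟩
        · intro h
          have : i0 ∈ (⋃ q ∈ c, q.1) ∩ ⋃ q ∈ c, q.2 :=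
            ⟨Set.eq_univ_iff_forall.1 h i0, hi0'⟩
          rw [disj] at this; exact this
        · rintro s t hs hst
          obtain ⟨u, hu, hsu⟩ := Set.mem_iUnion₂.1 hs
          exact Set.mem_iUnion₂.2 ⟨u, hu, (hcS hu).2.1.1.2.1 s t hsu hst⟩
        · rintro s t hs ht
          obtain ⟨u, hu, hsu⟩ := Set.mem_iUnion₂.1 hs
          obtain ⟨v, hv, htv⟩ := Set.mem_iUnion₂.1 ht
          rcases key u v hu hv with h | h
          · exact Set.mem_iUnion₂.2 ⟨v, hv, (hcS hv).2.1.1.2.2 s t (h.2 hsu) htv⟩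
          · exact Set.mem_iUnion₂.2 ⟨u, hu, (hcS hu).2.1.1.2.2 s t hsu (h.2 htv)⟩
        · intro h
          have : f0 ∈ (⋃ q ∈ c, q.1) ∩ ⋃ q ∈ c, q.2 :=
            ⟨hf0', Set.eq_univ_iff_forall.1 h f0⟩
          rw [disj] at this; exact this
      · intro z hz
        exact ⟨fun s hs => Set.mem_iUnion₂.2 ⟨z, hz, hs⟩,
               fun s hs => Set.mem_iUnion₂.2 ⟨z, hz, hs⟩⟩) p hp
  refine ⟨m, ⟨hmS, ?_, ?_⟩, hpm.1, hpm.2⟩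
  · intro F' hF' hss
    by_contra h
    rw [Set.not_nonempty_iff_eq_empty] at h
    have hm2 : UrqFIPair (F', m.2) := ⟨hF', hmS.2.1, h⟩
    have := hmax hm2 ⟨hss.1, le_rfl⟩
    exact hss.2 this.1
  · intro I' hI' hss
    by_contra h
    rw [Set.not_nonempty_iff_eq_empty] at h
    have hm2 : UrqFIPair (m.1, I') := ⟨hmS.1, hI', h⟩
    have := hmax hm2 ⟨le_rfl, hss.1⟩
    exact hss.2 this.2

theorem stmt7 {L : Type*} [Lattice L] [BoundedOrder L] (a : L) :
    UrqStable (UrqLe1 (L := L)) (UrqLe2 (L := L)) (UrqH a) := by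
  apply Set.eq_of_subset_of_subset
  · intro x hx z hz hzr
    exact hzr z (fun t ht => ht) (hz hx)
  · intro x hx
    by_contra ha
    have hdisj : (x.1.1 ∩ {b | b ≤ a} : Set L) = ∅ := by
      ext t
      simp only [Set.mem_inter_iff, Set.mem_setOf_eq, Set.mem_empty_iff_false, iff_false,
        not_and]
      intro ht hta
      exact ha (x.2.1.1.1.2.1 t a ht hta)
    have hpair : UrqFIPair (x.1.1, ({b | b ≤ a} : Set L)) := by
      refine ⟨x.2.1.1, ⟨⟨⟨a, le_rfl⟩, fun s t hs hts => le_trans hts hs,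
        fun s t hs ht => sup_le hs ht⟩, ?_⟩, hdisj⟩
      intro h
      obtain ⟨f0, hf0⟩ := x.2.1.1.1.1
      have : f0 ∈ x.1.1 ∩ {b | b ≤ a} := ⟨hf0, Set.eq_univ_iff_forall.1 h f0⟩
      rw [hdisj] at this; exact this
    obtain ⟨q, hq, hq1, hq2⟩ := urq_exists_max_ext _ hpair
    have haz : a ∈ q.2 := hq2 le_rfl
    have := hx ⟨q, hq⟩ hq1
    change ¬ ∀ z : UrqXL L, UrqLe2 (⟨q, hq⟩ : UrqXL L) z → z ∉ UrqH a at this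
    push_neg at this
    obtain ⟨w, hw2, hwa⟩ := this
    have : a ∈ w.1.1 ∩ w.1.2 := ⟨hwa, hw2 haz⟩
    rw [w.2.1.2.2] at this
    exact this
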